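/- Equivalence of removing a slot and augmenting the next slot's energy: for f strictly concave increasing, the problem of maximizing ∑_{i≠k} f(q_i) subject to ∑_{i≤j, i≠k} q_i ≤ ∑_{i≤j, i≠k} Ē_i + α ∑_{i≤j, i≠k} δ_i, ∑_{i≤j} δ_i ≤ ∑_{i≤j} H_i for all j, and δ_k = 0, has the same optimal value as maximizing ∑_{i≠k} f(q_i) subject to ∑_{i≤j, i≠k} q_i ≤ ∑_{i≤j, i≠k} (Ē_i + α H''_i) for all j, where H''_i = H_i for i ∉ {k, k+1} and H''_{k+1} = H_{k+1} + H_k (assuming k < N). -/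

import Mathlib

open Finset

section Aux
variable {N : ℕ} {k k1 : Fin N}

private lemma aux_erase_eq {j : Fin N} (hkj : ¬ k ≤ j) :
    (Iic j).erase k = Iic j :=
  erase_eq_of_notMem (by simp [mem_Iic, hkj])

private lemma aux_sum_eq (H H'' : Fin N → ℝ)
    (hkk1 : (k : ℕ) + 1 = (k1 : ℕ))
    (hH''1 : ∀ i, i ≠ k → i ≠ k1 → H'' i = H i)
    (hH''2 : H'' k1 = H k1 + H k)
    {j : Fin N} (hk1 : k1 ≤ j) :
    ∑ i ∈ (Iic j).erase k, H'' i = ∑ i ∈ Iic j, H i := by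
  have hkk1' : k < k1 := by rw [Fin.lt_def]; omega
  have hk : k ∈ Iic j := mem_Iic.2 (le_of_lt (lt_of_lt_of_le hkk1' hk1))
  have hk1m : k1 ∈ (Iic j).erase k :=
    mem_erase.2 ⟨ne_of_gt hkk1', mem_Iic.2 hk1⟩
  rw [← Finset.add_sum_erase _ H'' hk1m, hH''2,
      ← Finset.add_sum_erase _ H hk, ← Finset.add_sum_erase _ H hk1m]
  have h : ∑ i ∈ ((Iic j).erase k).erase k1, H'' i
      = ∑ i ∈ ((Iic j).erase k).erase k1, H i := by
    refine Finset.sum_congr rfl fun i hi => ?_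
    simp only [mem_erase] at hi
    exact hH''1 i hi.2.1 hi.1
  rw [h]; ring

end Aux

theorem stmt_17 (N : ℕ) (hN : 0 < N)
    (Ebar H H'' : Fin N → ℝ)
    (hEbar : ∀ i, 0 ≤ Ebar i) (hH : ∀ i, 0 ≤ H i)
    (α : ℝ) (hα0 : 0 ≤ α) (hα1 : α ≤ 1)
    (f : ℝ → ℝ)
    (hconc : StrictConcaveOn ℝ (Set.Ici 0) f)
    (hmono : StrictMonoOn f (Set.Ici 0))
    (k k1 : Fin N) (hkk1 : (k : ℕ) + 1 = (k1 : ℕ))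
    (hH''1 : ∀ i, i ≠ k → i ≠ k1 → H'' i = H i)
    (hH''2 : H'' k1 = H k1 + H k) :
    sSup {v : ℝ | ∃ q δ : Fin N → ℝ,
        (∀ i, i ≠ k → 0 ≤ q i) ∧ (∀ i, 0 ≤ δ i) ∧ δ k = 0 ∧
        (∀ j : Fin N, ∑ i ∈ (Iic j).erase k, q i ≤
          (∑ i ∈ (Iic j).erase k, Ebar i) +
            α * ∑ i ∈ (Iic j).erase k, δ i) ∧
        (∀ j : Fin N, ∑ i ∈ Iic j, δ i ≤ ∑ i ∈ Iic j, H i) ∧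
        v = ∑ i ∈ univ.erase k, f (q i)} =
    sSup {v : ℝ | ∃ q : Fin N → ℝ,
        (∀ i, i ≠ k → 0 ≤ q i) ∧
        (∀ j : Fin N, ∑ i ∈ (Iic j).erase k, q i ≤
          ∑ i ∈ (Iic j).erase k, (Ebar i + α * H'' i)) ∧
        v = ∑ i ∈ univ.erase k, f (q i)} := by
  have hkk1' : k < k1 := by rw [Fin.lt_def]; omega
  -- small slots lemma: H'' = H on anything below k
  have hIoK : ∀ {i : Fin N}, i < k1 → i ≠ k → H'' i = H i := fun {i} hik hine =>
    hH''1 i hine (ne_of_lt hik)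
  -- L1 : ∑ over erase k of H'' ≤ ∑ over Iic j of H
  have L1 : ∀ j : Fin N, ∑ i ∈ (Iic j).erase k, H'' i ≤ ∑ i ∈ Iic j, H i := by
    intro j
    rcases le_or_gt k1 j with h1 | h1
    · exact le_of_eq (aux_sum_eq H H'' hkk1 hH''1 hH''2 h1)
    rcases le_or_gt k j with h2 | h2
    · -- j = k
      have hjk : j = k := by
        apply Fin.ext
        have := Fin.lt_def.1 h1
        have := Fin.le_def.1 h2
        omega
      rw [hjk]
      rw [Finset.Iic_erase]
      have heq : ∑ i ∈ Iio k, H'' i = ∑ i ∈ Iio k, H i := by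
        refine Finset.sum_congr rfl fun i hi => ?_
        rw [mem_Iio] at hi
        exact hIoK (hi.trans hkk1') (ne_of_lt hi)
      rw [heq]
      have : Iio k ⊆ Iic k := Iio_subset_Iic_self
      exact Finset.sum_le_sum_of_subset_of_nonneg this fun i _ _ => hH i
    · rw [aux_erase_eq (not_le.2 h2)]
      refine le_of_eq (Finset.sum_congr rfl fun i hi => ?_)
      rw [mem_Iic] at hi
      exact hIoK (lt_of_le_of_lt hi (h2.trans hkk1')) (ne_of_lt (lt_of_le_of_lt hi h2))
  have hset : {v : ℝ | ∃ q δ : Fin N → ℝ,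
        (∀ i, i ≠ k → 0 ≤ q i) ∧ (∀ i, 0 ≤ δ i) ∧ δ k = 0 ∧
        (∀ j : Fin N, ∑ i ∈ (Iic j).erase k, q i ≤
          (∑ i ∈ (Iic j).erase k, Ebar i) +
            α * ∑ i ∈ (Iic j).erase k, δ i) ∧
        (∀ j : Fin N, ∑ i ∈ Iic j, δ i ≤ ∑ i ∈ Iic j, H i) ∧
        v = ∑ i ∈ univ.erase k, f (q i)} =
      {v : ℝ | ∃ q : Fin N → ℝ,
        (∀ i, i ≠ k → 0 ≤ q i) ∧
        (∀ j : Fin N, ∑ i ∈ (Iic j).erase k, q i ≤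
          ∑ i ∈ (Iic j).erase k, (Ebar i + α * H'' i)) ∧
        v = ∑ i ∈ univ.erase k, f (q i)} := by
    ext v
    simp only [Set.mem_setOf_eq]
    constructor
    · rintro ⟨q, δ, hq0, hδ0, hδk, hqc, hδc, hv⟩
      refine ⟨q, hq0, fun j => ?_, hv⟩
      -- L2 : ∑ erase δ ≤ ∑ erase H''
      have L2 : ∑ i ∈ (Iic j).erase k, δ i ≤ ∑ i ∈ (Iic j).erase k, H'' i := by
        rcases le_or_gt k1 j with h1 | h1
        · rw [aux_sum_eq H H'' hkk1 hH''1 hH''2 h1]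
          have hk : k ∈ Iic j := mem_Iic.2 (le_of_lt (lt_of_lt_of_le hkk1' h1))
          calc ∑ i ∈ (Iic j).erase k, δ i
              = δ k + ∑ i ∈ (Iic j).erase k, δ i := by rw [hδk]; ring
            _ = ∑ i ∈ Iic j, δ i := Finset.add_sum_erase _ δ hk
            _ ≤ ∑ i ∈ Iic j, H i := hδc j
        rcases le_or_gt k j with h2 | h2
        · have hjk : j = k := by
            apply Fin.ext
            have := Fin.lt_def.1 h1
            have := Fin.le_def.1 h2
            omega
          rw [hjk]
          rw [Finset.Iic_erase]
          have heq : ∑ i ∈ Iio k, H'' i = ∑ i ∈ Iio k, H i := by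
            refine Finset.sum_congr rfl fun i hi => ?_
            rw [mem_Iio] at hi
            exact hIoK (hi.trans hkk1') (ne_of_lt hi)
          rw [heq]
          rcases Nat.eq_zero_or_pos (k : ℕ) with hk0 | hk0
          · have : Iio k = ∅ := by
              ext i; simp [mem_Iio, Fin.lt_def, hk0]
            simp [this]
          · set j' : Fin N := ⟨(k : ℕ) - 1, by omega⟩ with hj'
            have hIio : Iio k = Iic j' := by
              ext i
              simp only [mem_Iio, mem_Iic, Fin.lt_def, Fin.le_def, hj']
              omega
            rw [hIio]
            exact hδc j'
        · rw [aux_erase_eq (not_le.2 h2)]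
          have heq : ∑ i ∈ Iic j, H'' i = ∑ i ∈ Iic j, H i := by
            refine Finset.sum_congr rfl fun i hi => ?_
            rw [mem_Iic] at hi
            exact hIoK (lt_of_le_of_lt hi (h2.trans hkk1')) (ne_of_lt (lt_of_le_of_lt hi h2))
          rw [heq]
          exact hδc j
      calc ∑ i ∈ (Iic j).erase k, q i
          ≤ (∑ i ∈ (Iic j).erase k, Ebar i) + α * ∑ i ∈ (Iic j).erase k, δ i := hqc j
        _ ≤ (∑ i ∈ (Iic j).erase k, Ebar i) + α * ∑ i ∈ (Iic j).erase k, H'' i := by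
            gcongr
        _ = ∑ i ∈ (Iic j).erase k, (Ebar i + α * H'' i) := by
            rw [Finset.sum_add_distrib, Finset.mul_sum]
    · rintro ⟨q, hq0, hqc, hv⟩
      refine ⟨q, fun i => if i = k then 0 else H'' i, hq0, ?_, by simp, ?_, ?_, hv⟩
      · intro i
        by_cases hik : i = k
        · simp [hik]
        · simp only [if_neg hik]
          by_cases hik1 : i = k1
          · rw [hik1, hH''2]; exact add_nonneg (hH k1) (hH k)
          · rw [hH''1 i hik hik1]; exact hH i
      · intro j
        have heq : ∑ i ∈ (Iic j).erase k, (if i = k then 0 else H'' i)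
            = ∑ i ∈ (Iic j).erase k, H'' i := by
          refine Finset.sum_congr rfl fun i hi => ?_
          rw [if_neg (mem_erase.1 hi).1]
        rw [heq]
        calc ∑ i ∈ (Iic j).erase k, q i
            ≤ ∑ i ∈ (Iic j).erase k, (Ebar i + α * H'' i) := hqc j
          _ = (∑ i ∈ (Iic j).erase k, Ebar i) + α * ∑ i ∈ (Iic j).erase k, H'' i := by
              rw [Finset.sum_add_distrib, Finset.mul_sum]
      · intro j
        have heq : ∑ i ∈ Iic j, (if i = k then 0 else H'' i)
            = ∑ i ∈ (Iic j).erase k, H'' i := by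
          rcases le_or_gt k j with h2 | h2
          · have hk : k ∈ Iic j := mem_Iic.2 h2
            rw [← Finset.add_sum_erase _ _ hk, if_pos rfl, zero_add]
            refine Finset.sum_congr rfl fun i hi => ?_
            rw [if_neg (mem_erase.1 hi).1]
          · rw [aux_erase_eq (not_le.2 h2)]
            refine Finset.sum_congr rfl fun i hi => ?_
            rw [mem_Iic] at hi
            rw [if_neg (ne_of_lt (lt_of_le_of_lt hi h2))]
        rw [heq]
        exact L1 j
  rw [hset]
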